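/- Define ξ_k : ℕ → ordinals by ξ_k(0)=0 and, for m in k-normal form A_a(k,b)+l: ξ_k(m) = b+1 if a=0; ξ_k(m) = ω·(1+b)+l if a=1; ξ_k(m) = ω²·(-1+ξ_k(a)) + ω·b + l if a ≥ 2. Then ξ_k(m) < ω^ω for all m, and for all m > 0, ξ_k(m-1) < ξ_k(m). -/

import Mathlib

/-- The parametrized Ackermann function: `A a k b` is `A_a(k,b)`. -/
def A : ℕ → ℕ → ℕ → ℕ
  | 0, _, b => b + 1
  | a+1, k, 0 => (fun x => A a k x)^[k] 0
  | a+1, k, b+1 => (fun x => A a k x)^[k] (A (a+1) k b)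
  termination_by a _ b => (a, b)

/-- `m = A_a(k,b) + l` is the `k`-normal form of `m`: `a` is maximal with
`A_a(k,0) ≤ m` and `b` is maximal with `A_a(k,b) ≤ m`. -/
def IsNF (k m a b l : ℕ) : Prop :=
  m = A a k b + l ∧ A a k 0 ≤ m ∧
  (∀ a', A a' k 0 ≤ m → a' ≤ a) ∧
  (∀ b', A a k b' ≤ m → b' ≤ b)

/-- The graph of the hereditary base change operation `m ↦ m[k←k+1]`. -/
inductive BC (k : ℕ) : ℕ → ℕ → Prop
  | zero : BC k 0 0
  | step {a b l a' b'} :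
      IsNF k (A a k b + l) a b l → BC k a a' → BC k b b' →
      BC k (A a k b + l) (A a' (k+1) b' + l)

open Ordinal in
/-- `-c + o`: truncated subtraction on finite ordinals, identity on infinite ones. -/
noncomputable def msub (c : ℕ) (o : Ordinal) : Ordinal :=
  if o < Ordinal.omega0 then o - c else o

open Ordinal in
/-- The graph of the map `ξ_k` assigning ordinals to natural numbers, defined
via `k`-normal forms: `ξ_k(m) = b+1` if `a = 0`, `ω·(1+b)+l` if `a = 1`, and
`ω²·(-1+ξ_k(a)) + ω·b + l` if `a ≥ 2`. -/
inductive Xi (k : ℕ) : ℕ → Ordinal → Prop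
  | zero : Xi k 0 0
  | base {b l : ℕ} : IsNF k (A 0 k b + l) 0 b l →
      Xi k (A 0 k b + l) ((b : Ordinal) + 1)
  | one {b l : ℕ} : IsNF k (A 1 k b + l) 1 b l →
      Xi k (A 1 k b + l) (omega0 * (1 + (b : Ordinal)) + (l : Ordinal))
  | ge {a b l : ℕ} {oa : Ordinal} : 2 ≤ a → IsNF k (A a k b + l) a b l →
      Xi k a oa →
      Xi k (A a k b + l) (omega0 ^ (2 : Ordinal) * msub 1 oa +
        omega0 * (b : Ordinal) + (l : Ordinal))

/-! ### Arithmetic lemmas about `A` -/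

theorem A_zero (k b : ℕ) : A 0 k b = b + 1 := by rw [A]
theorem A_succ_zero (a k : ℕ) : A (a+1) k 0 = (A a k)^[k] 0 := by rw [A]
theorem A_succ_succ (a k b : ℕ) : A (a+1) k (b+1) = (A a k)^[k] (A (a+1) k b) := by rw [A]

theorem iter_ge (f : ℕ → ℕ) (h : ∀ x, x < f x) : ∀ n x, x + n ≤ f^[n] x := by
  intro n
  induction n with
  | zero => simp
  | succ n ih =>
    intro x
    rw [Function.iterate_succ_apply]
    have := ih (f x)
    have := h x
    omega

theorem lt_A (k : ℕ) (hk : 1 ≤ k) : ∀ a b, b < A a k b := by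
  intro a
  induction a with
  | zero => intro b; rw [A_zero]; omega
  | succ a ih =>
    have hit : ∀ n x, x + n ≤ (A a k)^[n] x := iter_ge _ ih
    intro b
    induction b with
    | zero => rw [A_succ_zero]; have := hit k 0; omega
    | succ b ihb => rw [A_succ_succ]; have := hit k (A (a+1) k b); omega

theorem A_strictMono (k : ℕ) (hk : 1 ≤ k) (a : ℕ) : StrictMono (A a k) := by
  apply strictMono_nat_of_lt_succ
  intro b
  match a with
  | 0 => rw [A_zero, A_zero]; omega
  | a+1 =>
    rw [A_succ_succ]
    have := iter_ge _ (lt_A k hk a) k (A (a+1) k b)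
    omega

theorem A_zero_lt_succ (k : ℕ) (hk : 2 ≤ k) (a : ℕ) : A a k 0 < A (a+1) k 0 := by
  obtain ⟨j, rfl⟩ : ∃ j, k = j + 1 := ⟨k - 1, by omega⟩
  rw [A_succ_zero, Function.iterate_succ_apply']
  have h1 : 1 ≤ (A a (j+1))^[j] 0 := by
    have := iter_ge _ (lt_A (j+1) (by omega) a) j 0
    omega
  calc A a (j+1) 0 < A a (j+1) 1 := A_strictMono _ (by omega) a (by omega)
    _ ≤ A a (j+1) ((A a (j+1))^[j] 0) := (A_strictMono _ (by omega) a).monotone h1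

theorem lt_A_zero (k : ℕ) (hk : 2 ≤ k) : ∀ a, a < A a k 0 := by
  intro a
  induction a with
  | zero => rw [A_zero]; omega
  | succ a ih => have := A_zero_lt_succ k hk a; omega

theorem A_zero_mono (k : ℕ) (hk : 2 ≤ k) : StrictMono (fun a => A a k 0) :=
  strictMono_nat_of_lt_succ (A_zero_lt_succ k hk)

theorem isNF_unique {k m a b l a' b' l' : ℕ} (h : IsNF k m a b l) (h' : IsNF k m a' b' l') :
    a = a' ∧ b = b' ∧ l = l' := by
  obtain ⟨e, h1, h2, h3⟩ := h
  obtain ⟨e', h1', h2', h3'⟩ := h'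
  have haa : a = a' := le_antisymm (h2' a h1) (h2 a' h1')
  subst haa
  have hbb : b = b' := le_antisymm (h3' b (by omega)) (h3 b' (by omega))
  subst hbb
  exact ⟨rfl, rfl, by omega⟩

/-! ### Ordinal helpers -/

open Ordinal

theorem msub_le (o : Ordinal) : msub 1 o ≤ o := by
  unfold msub; split
  · exact_mod_cast Ordinal.sub_le_self o 1
  · exact le_rfl

theorem one_le_msub {o : Ordinal} (h : 2 ≤ o) : 1 ≤ msub 1 o := by
  unfold msub; split
  · rename_i hlt
    obtain ⟨n, rfl⟩ := Ordinal.lt_omega0.1 hlt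
    have h2 : 2 ≤ n := by exact_mod_cast h
    rw [← Ordinal.natCast_sub]
    exact_mod_cast Nat.one_le_iff_ne_zero.2 (by omega)
  · exact le_trans (by norm_num) h

theorem msub_lt_msub {o1 o2 : Ordinal} (h : o1 < o2) (h2 : 2 ≤ o2) :
    msub 1 o1 < msub 1 o2 := by
  unfold msub
  by_cases h1 : o1 < omega0
  · by_cases hb : o2 < omega0
    · simp only [h1, hb, if_true]
      obtain ⟨n, rfl⟩ := Ordinal.lt_omega0.1 h1
      obtain ⟨m, rfl⟩ := Ordinal.lt_omega0.1 hb
      rw [← Ordinal.natCast_sub, ← Ordinal.natCast_sub]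
      have hnm : n < m := by exact_mod_cast h
      have hm2 : 2 ≤ m := by exact_mod_cast h2
      exact_mod_cast by omega
    · simp only [h1, hb, if_true, if_false]
      exact lt_of_le_of_lt (Ordinal.sub_le_self _ _) (lt_of_lt_of_le h1 (not_lt.1 hb))
  · have hb : ¬ o2 < omega0 := fun hh => h1 (h.trans hh)
    simp only [h1, hb, if_false]
    exact h

theorem sq_eq : (omega0 : Ordinal) ^ (2:Ordinal) = omega0 * omega0 := by
  rw [show ((2:Ordinal)) = (1:Ordinal) + 1 by norm_num, Ordinal.opow_add, Ordinal.opow_one]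

theorem two_opow_lt : (omega0 : Ordinal) ^ (2:Ordinal) < omega0 ^ omega0 :=
  (Ordinal.opow_lt_opow_iff_right one_lt_omega0).2 (by exact_mod_cast nat_lt_omega0 2)

theorem mul_lt_oo {x : Ordinal} (hx : x < omega0 ^ omega0) :
    omega0 ^ (2:Ordinal) * x < omega0 ^ omega0 := by
  have := Ordinal.principal_mul_omega0_opow_opow 1
  rw [Ordinal.opow_one] at this
  exact this two_opow_lt hx

theorem add3_lt_oo {x y z : Ordinal} (hx : x < omega0 ^ omega0) (hy : y < omega0 ^ omega0)
    (hz : z < omega0 ^ omega0) : x + y + z < omega0 ^ omega0 :=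
  Ordinal.principal_add_omega0_opow _ (Ordinal.principal_add_omega0_opow _ hx hy) hz

theorem omega_le_oo : (omega0 : Ordinal) ≤ omega0 ^ omega0 := by
  conv_lhs => rw [← Ordinal.opow_one omega0]
  exact Ordinal.opow_le_opow_right omega0_pos (Order.one_le_iff_pos.2 omega0_pos)

theorem nat_lt_oo (l : ℕ) : (l:Ordinal) < omega0 ^ omega0 :=
  (nat_lt_omega0 l).trans_le omega_le_oo

/-- `ω·x + l < ω·y` whenever `l < ω` and `x + 1 ≤ y`. -/
theorem key1 {x y l2 : Ordinal} (hl2 : l2 < omega0) (hxy : x + 1 ≤ y) :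
    omega0 * x + l2 < omega0 * y :=
  calc omega0 * x + l2 < omega0 * x + omega0 := add_lt_add_right hl2 _
    _ = omega0 * (x + 1) := by rw [mul_add, mul_one]
    _ ≤ omega0 * y := mul_le_mul_right hxy _

/-- `ω²·X' + r < ω²·X` whenever `r < ω²` and `X' < X`. -/
theorem key2 {X' X r : Ordinal} (h : X' < X) (hr : r < omega0 ^ (2:Ordinal)) :
    omega0 ^ (2:Ordinal) * X' + r < omega0 ^ (2:Ordinal) * X :=
  calc omega0 ^ (2:Ordinal) * X' + r < omega0 ^ (2:Ordinal) * X' + omega0 ^ (2:Ordinal) :=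
        add_lt_add_right hr _
    _ = omega0 ^ (2:Ordinal) * (X' + 1) := by rw [mul_add, mul_one]
    _ ≤ omega0 ^ (2:Ordinal) * X := mul_le_mul_right (Order.add_one_le_of_lt h) _

theorem omul_nat_lt_sq (x l2 : ℕ) : omega0 * (x:Ordinal) + (l2:Ordinal) < omega0 ^ (2:Ordinal) := by
  rw [sq_eq]
  apply key1 (nat_lt_omega0 l2)
  exact le_of_lt (by exact_mod_cast nat_lt_omega0 (x+1))

/-! ### Structure of `Xi` -/

theorem xi_spec {k n : ℕ} {o : Ordinal} (h : Xi k n o) :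
    (n = 0 ∧ o = 0) ∨
    ∃ a b l, IsNF k n a b l ∧
      ((a = 0 ∧ o = (b:Ordinal) + 1) ∨
       (a = 1 ∧ o = omega0 * (1 + (b:Ordinal)) + (l:Ordinal)) ∨
       (2 ≤ a ∧ ∃ oa, Xi k a oa ∧
          o = omega0 ^ (2:Ordinal) * msub 1 oa + omega0 * (b:Ordinal) + (l:Ordinal))) := by
  cases h with
  | zero => exact Or.inl ⟨rfl, rfl⟩
  | base hnf => exact Or.inr ⟨0, _, _, hnf, Or.inl ⟨rfl, rfl⟩⟩
  | one hnf => exact Or.inr ⟨1, _, _, hnf, Or.inr (Or.inl ⟨rfl, rfl⟩)⟩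
  | ge ha hnf hxa => exact Or.inr ⟨_, _, _, hnf, Or.inr (Or.inr ⟨ha, _, hxa, rfl⟩)⟩

theorem xi_zero_eq {k : ℕ} (hk : 1 ≤ k) {o : Ordinal} (h : Xi k 0 o) : o = 0 := by
  rcases xi_spec h with ⟨_, rfl⟩ | ⟨a, b, l, hnf, _⟩
  · rfl
  · exfalso; have := lt_A k hk a b; have := hnf.1; omega

universe u

/-- The main combined induction: functionality, lower bound and strict monotonicity. -/
theorem xi_main (k : ℕ) (hk : 3 ≤ k) : ∀ m : ℕ,
    (∀ o o' : Ordinal.{u}, Xi k m o → Xi k m o' → o = o') ∧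
    (∀ o : Ordinal.{u}, Xi k m o → (m:Ordinal) ≤ o) ∧
    (0 < m → ∀ o o' : Ordinal.{u}, Xi k (m-1) o' → Xi k m o → o' < o) := by
  have hk1 : 1 ≤ k := by omega
  have hk2 : 2 ≤ k := by omega
  intro m
  induction m using Nat.strong_induction_on with
  | _ m IH => ?_
  -- Functionality
  have func : ∀ o o', Xi k m o → Xi k m o' → o = o' := by
    intro o o' h h'
    rcases xi_spec h with ⟨rfl, rfl⟩ | ⟨a, b, l, hnf, hsh⟩
    · exact (xi_zero_eq hk1 h').symm
    rcases xi_spec h' with ⟨hm0, rfl⟩ | ⟨a', b', l', hnf', hsh'⟩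
    · exfalso; have := lt_A k hk1 a b; have := hnf.1; omega
    obtain ⟨rfl, rfl, rfl⟩ : a = a' ∧ b = b' ∧ l = l' := isNF_unique hnf hnf'
    have ham : a < m := lt_of_lt_of_le (lt_A_zero k hk2 a) hnf.2.1
    rcases hsh with ⟨ha, rfl⟩ | ⟨ha, rfl⟩ | ⟨ha, oa, hxa, rfl⟩ <;>
      rcases hsh' with ⟨ha', rfl⟩ | ⟨ha', rfl⟩ | ⟨ha', oa', hxa', rfl⟩ <;>
      try omega
    · rfl
    · rfl
    · have : oa = oa' := (IH a ham).1 oa oa' hxa hxa'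
      rw [this]
  refine ⟨func, ?_⟩
  -- Lower bound
  have lb : ∀ o, Xi k m o → (m:Ordinal) ≤ o := by
    intro o h
    rcases xi_spec h with ⟨rfl, rfl⟩ | ⟨a, b, l, hnf, hsh⟩
    · simp
    rcases hsh with ⟨rfl, rfl⟩ | ⟨rfl, rfl⟩ | ⟨ha, oa, hxa, rfl⟩
    · -- a = 0 forces l = 0 and m = b + 1
      have hb := hnf.2.2.2 (b + l)
      rw [A_zero] at hb
      have h1 := hnf.1
      rw [A_zero] at h1
      have hl : l = 0 := by omega
      have hm : m = b + 1 := by omega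
      subst hm
      push_cast
      exact le_rfl
    · -- a = 1 : o ≥ ω
      have h1 : (m:Ordinal) < omega0 := nat_lt_omega0 m
      have h2 : omega0 ≤ omega0 * (1 + (b:Ordinal)) := by
        conv_lhs => rw [← mul_one omega0]
        exact mul_le_mul_right le_self_add _
      exact le_of_lt (h1.trans_le (h2.trans le_self_add))
    · -- a ≥ 2 : o ≥ ω²
      have ham : a < m := lt_of_lt_of_le (lt_A_zero k hk2 a) hnf.2.1
      have hoa : (a:Ordinal) ≤ oa := (IH a ham).2.1 oa hxa
      have h2 : (2:Ordinal) ≤ oa := le_trans (by exact_mod_cast ha) hoa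
      have h3 : omega0 ^ (2:Ordinal) ≤ omega0 ^ (2:Ordinal) * msub 1 oa := by
        conv_lhs => rw [← mul_one (omega0 ^ (2:Ordinal))]
        exact mul_le_mul_right (one_le_msub h2) _
      have h4 : (m:Ordinal) < omega0 ^ (2:Ordinal) := by
        rw [sq_eq]
        calc (m:Ordinal) < omega0 := nat_lt_omega0 m
          _ = omega0 * 1 := (mul_one _).symm
          _ ≤ omega0 * omega0 := mul_le_mul_right (Order.one_le_iff_pos.2 omega0_pos) _
      exact le_of_lt (h4.trans_le (h3.trans le_self_add |>.trans le_self_add))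
  refine ⟨lb, ?_⟩
  -- Strict monotonicity
  intro hm o o' h' h
  rcases xi_spec h with ⟨rfl, rfl⟩ | ⟨a, b, l, hnf, hsh⟩
  · omega
  rcases hsh with ⟨rfl, rfl⟩ | ⟨rfl, rfl⟩ | ⟨ha, oa, hxa, rfl⟩
  · -- a = 0 : m = b + 1 (l = 0 forced)
    have hbmax := hnf.2.2.2 (b + l)
    rw [A_zero] at hbmax
    have h1 := hnf.1
    rw [A_zero] at h1
    have hl : l = 0 := by omega
    have hmeq : m = b + 1 := by omega
    rcases Nat.eq_zero_or_pos b with rfl | hb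
    · -- m = 1
      have : m - 1 = 0 := by omega
      rw [this] at h'
      rw [xi_zero_eq hk1 h']
      exact_mod_cast Nat.zero_lt_one
    · -- m - 1 = b > 0
      rcases xi_spec h' with ⟨hz, rfl⟩ | ⟨a2, b2, l2, hnf2, hsh2⟩
      · exfalso; omega
      have ha2 : a2 = 0 := by
        have := hnf.2.2.1 a2 (le_trans hnf2.2.1 (by omega))
        omega
      subst ha2
      rcases hsh2 with ⟨_, rfl⟩ | ⟨h10, _⟩ | ⟨h20, _⟩
      · have h21 := hnf2.1
        rw [A_zero] at h21
        have : b2 + 1 < b + 1 := by omega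
        exact_mod_cast this
      · omega
      · omega
  · -- a = 1
    have hA10 : 2 ≤ A 1 k 0 := lt_A_zero k hk2 1
    have hm2 : 2 ≤ m := le_trans hA10 hnf.2.1
    rcases xi_spec h' with ⟨hz, rfl⟩ | ⟨a2, b2, l2, hnf2, hsh2⟩
    · exfalso; omega
    have hmono := A_strictMono k hk1 1
    rcases Nat.eq_zero_or_pos (b + l) with hbl | hbl
    · -- b = 0, l = 0 : m = A 1 k 0, m-1 has a-component 0
      have hb0 : b = 0 := by omega
      have hl0 : l = 0 := by omega
      subst hb0; subst hl0
      have hmeq : m = A 1 k 0 := by have := hnf.1; omega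
      have ha2 : a2 = 0 := by
        by_contra hne
        have h1a : 1 ≤ a2 := by omega
        have := (A_zero_mono k hk2).monotone h1a
        have h2 := hnf2.2.1
        omega
      subst ha2
      rcases hsh2 with ⟨_, rfl⟩ | ⟨h10, _⟩ | ⟨h20, _⟩
      · have hlt : ((b2:Ordinal) + 1) < omega0 := by exact_mod_cast nat_lt_omega0 (b2+1)
        refine hlt.trans_le ?_
        push_cast
        rw [add_zero, add_zero, mul_one]
      · omega
      · omega
    · -- b > 0 or l > 0 : m-1 has a-component 1
      have hA0 : A 1 k 0 ≤ m - 1 := by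
        rcases Nat.eq_zero_or_pos l with hl0 | hl0
        · -- then b > 0
          have hbpos : 0 < b := by omega
          have := hmono (show b - 1 < b by omega)
          have h1 := hnf.1
          have hmon0b : A 1 k 0 ≤ A 1 k (b-1) := hmono.monotone (by omega)
          omega
        · have h1 := hnf.1
          have hmon0b : A 1 k 0 ≤ A 1 k b := hmono.monotone (by omega)
          omega
      have ha2 : a2 = 1 := by
        have hle : a2 ≤ 1 := hnf.2.2.1 a2 (le_trans hnf2.2.1 (by omega))
        have hge : 1 ≤ a2 := hnf2.2.2.1 1 hA0
        omega
      subst ha2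
      rcases hsh2 with ⟨h01, _⟩ | ⟨_, rfl⟩ | ⟨h21, _⟩
      · omega
      · -- compare ω(1+b2)+l2 < ω(1+b)+l
        have hb2b : b2 ≤ b := hnf.2.2.2 b2 (le_trans (by have := hnf2.1; omega) (by omega : m - 1 ≤ m))
        rcases Nat.lt_or_ge b2 b with hlt | hge
        · -- b2 < b
          refine lt_of_lt_of_le (key1 (nat_lt_omega0 l2) ?_) le_self_add
          have hnat : (1 + b2 + 1 : ℕ) ≤ 1 + b := by omega
          exact_mod_cast hnat
        · -- b2 = b, so l2 = l - 1 and l > 0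
          have hbb : b2 = b := by omega
          subst hbb
          have hl2 : l2 + 1 = l := by
            have h1 := hnf.1
            have h2 := hnf2.1
            omega
          apply add_lt_add_right
          exact_mod_cast by omega
      · omega
  · -- a ≥ 2
    have ham : a < m := lt_of_lt_of_le (lt_A_zero k hk2 a) hnf.2.1
    have hoa : (a:Ordinal) ≤ oa := (IH a ham).2.1 oa hxa
    have h2oa : (2:Ordinal) ≤ oa := le_trans (by exact_mod_cast ha) hoa
    have h1msub : 1 ≤ msub 1 oa := one_le_msub h2oa
    have hm2 : 2 ≤ m := by omega
    rcases xi_spec h' with ⟨hz, rfl⟩ | ⟨a2, b2, l2, hnf2, hsh2⟩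
    · exfalso; omega
    have hmono := A_strictMono k hk1 a
    rcases Nat.eq_zero_or_pos (b + l) with hbl | hbl
    · -- b = 0, l = 0 : m = A a k 0 and m-1 has a-component a-1
      have hb0 : b = 0 := by omega
      have hl0 : l = 0 := by omega
      subst hb0; subst hl0
      have hmeq : m = A a k 0 := by have := hnf.1; omega
      have ha2 : a2 = a - 1 := by
        have hlt : a2 < a := by
          by_contra hge
          have := (A_zero_mono k hk2).monotone (show a ≤ a2 by omega)
          have h2 := hnf2.2.1
          omega
        have hge : a - 1 ≤ a2 := by
          apply hnf2.2.2.1 (a-1)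
          have := A_zero_lt_succ k hk2 (a-1)
          rw [show a - 1 + 1 = a by omega] at this
          omega
        omega
      -- strict mono IH at a : oa2 < oa for any Xi k (a-1) oa2
      rcases Nat.lt_or_ge a 3 with ha3 | ha3
      · -- a = 2, a2 = 1
        have haa : a = 2 := by omega
        subst haa
        have ha21 : a2 = 1 := by omega
        subst ha21
        rcases hsh2 with ⟨h01, _⟩ | ⟨_, rfl⟩ | ⟨h21, _⟩
        · omega
        · -- ω(1+b2)+l2 < ω² ≤ ω²·msub1 oa
          have hlt : omega0 * (1 + (b2:Ordinal)) + (l2:Ordinal) < omega0 ^ (2:Ordinal) := by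
            have := omul_nat_lt_sq (1 + b2) l2
            push_cast at this
            exact this
          refine hlt.trans_le ?_
          simp only [Nat.cast_zero, mul_zero, add_zero]
          conv_lhs => rw [← mul_one (omega0 ^ (2:Ordinal))]
          exact mul_le_mul_right h1msub _
        · omega
      · -- a ≥ 3, a2 = a - 1 ≥ 2
        rcases hsh2 with ⟨h01, _⟩ | ⟨h11, _⟩ | ⟨ha2ge, oa2, hxa2, rfl⟩
        · omega
        · omega
        · have hxa2' : Xi k (a - 1) oa2 := by rwa [ha2] at hxa2
          have hoalt : oa2 < oa := (IH a ham).2.2 (by omega) oa oa2 hxa2' hxa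
          have hmsub : msub 1 oa2 < msub 1 oa := msub_lt_msub hoalt h2oa
          have hr : omega0 * (b2:Ordinal) + (l2:Ordinal) < omega0 ^ (2:Ordinal) :=
            omul_nat_lt_sq b2 l2
          have hfin := key2 hmsub hr
          simp only [Nat.cast_zero, mul_zero, add_zero]
          rw [add_assoc]
          exact hfin
    · -- b > 0 or l > 0 : m-1 has a-component a and the same oa
      have hA0 : A a k 0 ≤ m - 1 := by
        rcases Nat.eq_zero_or_pos l with hl0 | hl0
        · have hbpos : 0 < b := by omega
          have := hmono (show b - 1 < b by omega)
          have h1 := hnf.1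
          have hmon0b : A a k 0 ≤ A a k (b-1) := hmono.monotone (by omega)
          omega
        · have h1 := hnf.1
          have hmon0b : A a k 0 ≤ A a k b := hmono.monotone (by omega)
          omega
      have ha2 : a2 = a := by
        have hle : a2 ≤ a := hnf.2.2.1 a2 (le_trans hnf2.2.1 (by omega))
        have hge : a ≤ a2 := hnf2.2.2.1 a hA0
        omega
      rw [ha2] at hnf2 hsh2
      rcases hsh2 with ⟨h01, _⟩ | ⟨h11, _⟩ | ⟨_, oa2, hxa2, rfl⟩
      · omega
      · omega
      · have hoaeq : oa2 = oa := (IH a ham).1 oa2 oa hxa2 hxa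
        subst hoaeq
        have hb2b : b2 ≤ b := hnf.2.2.2 b2 (le_trans (by have := hnf2.1; omega) (by omega : m - 1 ≤ m))
        rcases Nat.lt_or_ge b2 b with hlt | hge
        · -- b2 < b
          rw [add_assoc, add_assoc]
          apply add_lt_add_right
          refine lt_of_lt_of_le (key1 (nat_lt_omega0 l2) ?_) le_self_add
          have hnat : (b2 + 1 : ℕ) ≤ b := by omega
          exact_mod_cast hnat
        · have hbb : b2 = b := by omega
          subst hbb
          have hl2 : l2 + 1 = l := by
            have h1 := hnf.1
            have h2 := hnf2.1
            omega
          apply add_lt_add_right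
          exact_mod_cast by omega

open Ordinal in
/-- `ξ_k(m) < ω^ω` for all `m`, and `ξ_k(m-1) < ξ_k(m)` for `m > 0`. -/
theorem xi_lt_omega_omega_and_strict_mono :
    (∀ k m : ℕ, ∀ o : Ordinal, 3 ≤ k → Xi k m o → o < omega0 ^ omega0) ∧
    (∀ k m : ℕ, ∀ o o' : Ordinal, 3 ≤ k → 0 < m →
      Xi k (m - 1) o' → Xi k m o → o' < o) := by
  constructor
  · intro k m o hk h
    induction h with
    | zero => exact lt_of_lt_of_le omega0_pos omega_le_oo
    | base hnf => exact (by exact_mod_cast nat_lt_omega0 (_ + 1) : ((_:ℕ):Ordinal) + 1 < omega0).trans_le omega_le_oo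
    | one hnf =>
      rename_i b l
      have h1 : omega0 * (1 + (b:Ordinal)) + (l:Ordinal) < omega0 ^ (2:Ordinal) := by
        have := omul_nat_lt_sq (1 + b) l
        push_cast at this
        exact this
      exact h1.trans two_opow_lt
    | ge ha hnf hxa ih =>
      rename_i a b l oa
      apply add3_lt_oo
      · exact mul_lt_oo (lt_of_le_of_lt (msub_le oa) ih)
      · have := (omul_nat_lt_sq b 0).trans two_opow_lt
        simpa using this
      · exact nat_lt_oo l
  · intro k m o o' hk hm h' h
    exact (xi_main k hk m).2.2 hm o o' h' h
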